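/- Let m ≥ 1, let b be an m×m real matrix, and let c : Fin m → Fin m → Fin m → Fin m → ℝ satisfy c_{ijls} = −c_{jils} and c_{ijls} = c_{lsij} for all indices. Suppose that for all sufficiently large r ∈ ℝ (so that r·1 − b is invertible) and for all i, j: ∑_{k,l,s} ρ(r)_{l j} · ρ(r)_{s k} · c_{i k l s} = 0, where ρ(r) = (r·1 − b)⁻¹. Then: (i) ∑_k c_{i k j k} = 0 for all i, j; (ii) ∑_{j,l} c_{i j k l} · (b_{l j} + b_{j l})/2 = 0 for all i, k; and (iii) ∑_{j,l} c_{i j k l} · (b_{l j} − b_{j l})/2 = 0 for all i, k. -/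

import Mathlib

open Matrix

section Aux

attribute [local instance] Matrix.linftyOpNormedAddCommGroup Matrix.linftyOpNormedRing
  Matrix.linftyOpNormedSpace

variable {m : ℕ}

/-- Entries are bounded by the `L∞`-operator norm. -/
lemma entry_abs_le_linfty (A : Matrix (Fin m) (Fin m) ℝ) (s k : Fin m) : |A s k| ≤ ‖A‖ := by
  have h : ‖A s k‖₊ ≤ ‖A‖₊ := by
    rw [Matrix.linfty_opNNNorm_def]
    refine le_trans ?_ (Finset.le_sup (Finset.mem_univ s))
    exact Finset.single_le_sum (f := fun j => ‖A s j‖₊) (fun _ _ => zero_le) (Finset.mem_univ k)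
  have := NNReal.coe_le_coe.mpr h
  simpa [Real.norm_eq_abs] using this

lemma tracefree_aux
    (hm : 1 ≤ m) (b : Matrix (Fin m) (Fin m) ℝ)
    (c : Fin m → Fin m → Fin m → Fin m → ℝ)
    (htrace : ∃ R : ℝ, ∀ r : ℝ, R ≤ r →
      IsUnit (r • (1 : Matrix (Fin m) (Fin m) ℝ) - b) ∧
      ∀ i j, ∑ k, ∑ l, ∑ s,
        (r • (1 : Matrix (Fin m) (Fin m) ℝ) - b)⁻¹ l j
          * (r • (1 : Matrix (Fin m) (Fin m) ℝ) - b)⁻¹ s k * c i k l s = 0) :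
    (∀ i p, ∑ k, c i k p k = 0) ∧ (∀ i p, ∑ k, ∑ s, b s k * c i k p s = 0) := by
  haveI : Nonempty (Fin m) := ⟨⟨0, hm⟩⟩
  obtain ⟨R, hR⟩ := htrace
  set M : ℝ → Matrix (Fin m) (Fin m) ℝ := fun r => r • (1 : Matrix (Fin m) (Fin m) ℝ) - b
    with hMdef
  set N : ℝ := max R (2 * ‖b‖ + 1) with hNdef
  have hNr : ∀ r : ℝ, N ≤ r → R ≤ r := fun r hr => le_trans (le_max_left _ _) hr
  have hNb : ∀ r : ℝ, N ≤ r → 2 * ‖b‖ + 1 ≤ r := fun r hr => le_trans (le_max_right _ _) hr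
  have hrpos : ∀ r : ℝ, N ≤ r → 0 < r := by
    intro r hr
    have := hNb r hr
    have hb0 : (0:ℝ) ≤ ‖b‖ := norm_nonneg b
    linarith
  -- `r • ρ = 1 + b * ρ`
  have hrrho : ∀ r : ℝ, N ≤ r → r • (M r)⁻¹ = 1 + b * (M r)⁻¹ := by
    intro r hr
    have hu := (hR r (hNr r hr)).1
    have hMρ : (M r) * (M r)⁻¹ = 1 :=
      Matrix.mul_nonsing_inv _ ((Matrix.isUnit_iff_isUnit_det _).mp hu)
    have h : r • (1 : Matrix (Fin m) (Fin m) ℝ) * (M r)⁻¹ - b * (M r)⁻¹ = 1 := by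
      rw [← Matrix.sub_mul]; exact hMρ
    rw [Matrix.smul_mul, one_mul, sub_eq_iff_eq_add] at h
    exact h
  -- norm bound
  have hbound : ∀ r : ℝ, N ≤ r → ‖(M r)⁻¹‖ ≤ 2 / r := by
    intro r hr
    have h1 := hrrho r hr
    have hr0 := hrpos r hr
    have hnorm : r * ‖(M r)⁻¹‖ ≤ 1 + ‖b‖ * ‖(M r)⁻¹‖ := by
      have h2 : ‖r • (M r)⁻¹‖ = r * ‖(M r)⁻¹‖ := by
        rw [norm_smul, Real.norm_eq_abs, abs_of_pos hr0]
      calc r * ‖(M r)⁻¹‖ = ‖r • (M r)⁻¹‖ := h2.symm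
        _ = ‖(1 : Matrix (Fin m) (Fin m) ℝ) + b * (M r)⁻¹‖ := by rw [h1]
        _ ≤ ‖(1 : Matrix (Fin m) (Fin m) ℝ)‖ + ‖b * (M r)⁻¹‖ := norm_add_le _ _
        _ ≤ 1 + ‖b‖ * ‖(M r)⁻¹‖ := by
            gcongr
            · exact le_of_eq norm_one
            · exact norm_mul_le _ _
    rw [le_div_iff₀ hr0]
    have hb := hNb r hr
    nlinarith [norm_nonneg (M r)⁻¹, norm_nonneg b,
      mul_nonneg (norm_nonneg (M r)⁻¹) (sub_nonneg.mpr hb)]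
  -- entries of `A * ρ r` tend to zero
  have philim : ∀ (A : Matrix (Fin m) (Fin m) ℝ) (i p : Fin m),
      Filter.Tendsto (fun r : ℝ => ∑ k, ∑ s, (A * (M r)⁻¹) s k * c i k p s)
        Filter.atTop (nhds 0) := by
    intro A i p
    have hρ : Filter.Tendsto (fun r : ℝ => (M r)⁻¹) Filter.atTop
        (nhds (0 : Matrix (Fin m) (Fin m) ℝ)) := by
      apply squeeze_zero_norm' (a := fun r : ℝ => 2 / r)
      · filter_upwards [Filter.eventually_ge_atTop N] with r hr
        exact hbound r hr
      · have h : Filter.Tendsto (fun r : ℝ => 2 * r⁻¹) Filter.atTop (nhds (2 * 0)) :=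
          tendsto_inv_atTop_zero.const_mul 2
        simpa [div_eq_mul_inv] using h
    have hent : ∀ s k : Fin m,
        Filter.Tendsto (fun r : ℝ => (M r)⁻¹ s k) Filter.atTop (nhds 0) := by
      intro s k
      apply squeeze_zero_norm (a := fun r : ℝ => ‖(M r)⁻¹‖)
      · intro r; simpa [Real.norm_eq_abs] using entry_abs_le_linfty ((M r)⁻¹) s k
      · simpa using hρ.norm
    have hmul : ∀ s k : Fin m,
        Filter.Tendsto (fun r : ℝ => (A * (M r)⁻¹) s k) Filter.atTop (nhds 0) := by
      intro s k
      have h : Filter.Tendsto (fun r : ℝ => ∑ t, A s t * (M r)⁻¹ t k) Filter.atTop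
          (nhds (∑ t : Fin m, A s t * 0)) := by
        apply tendsto_finset_sum
        intro t _
        exact (hent t k).const_mul _
      simpa [Matrix.mul_apply] using h
    have h : Filter.Tendsto (fun r : ℝ => ∑ k, ∑ s, (A * (M r)⁻¹) s k * c i k p s)
        Filter.atTop (nhds (∑ k : Fin m, ∑ s : Fin m, (0:ℝ) * c i k p s)) := by
      apply tendsto_finset_sum; intro k _
      apply tendsto_finset_sum; intro s _
      exact (hmul s k).mul_const _
    simpa using h
  -- eventually-constant limit lemma
  have ev_zero : ∀ (f : ℝ → ℝ) (e : ℝ), Filter.Tendsto f Filter.atTop (nhds 0) →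
      (∀ r : ℝ, N ≤ r → e + f r = 0) → e = 0 := by
    intro f e hf hc
    have h1 : Filter.Tendsto (fun r : ℝ => e + f r) Filter.atTop (nhds (e + 0)) :=
      tendsto_const_nhds.add hf
    have h2 : Filter.Tendsto (fun r : ℝ => e + f r) Filter.atTop (nhds 0) := by
      apply Filter.Tendsto.congr' _ tendsto_const_nhds
      filter_upwards [Filter.eventually_ge_atTop N] with r hr
      exact (hc r hr).symm
    have := tendsto_nhds_unique h1 h2
    linarith
  -- contraction: single-ρ identity
  have key : ∀ r : ℝ, N ≤ r → ∀ i p, ∑ k, ∑ s, (M r)⁻¹ s k * c i k p s = 0 := by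
    intro r hr i p
    have hu := (hR r (hNr r hr)).1
    have hz := (hR r (hNr r hr)).2
    have hρM : (M r)⁻¹ * (M r) = 1 :=
      Matrix.nonsing_inv_mul _ ((Matrix.isUnit_iff_isUnit_det _).mp hu)
    set g : Fin m → ℝ := fun l => ∑ k, ∑ s, (M r)⁻¹ s k * c i k l s with hg
    have h1 : (M r)⁻¹ᵀ *ᵥ g = 0 := by
      funext j
      have hcalc : ∑ l, (M r)⁻¹ l j * g l = 0 := by
        calc ∑ l, (M r)⁻¹ l j * g l
            = ∑ l, ∑ k, ∑ s, (M r)⁻¹ l j * ((M r)⁻¹ s k * c i k l s) := by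
              refine Finset.sum_congr rfl fun l _ => ?_
              rw [hg, Finset.mul_sum]
              exact Finset.sum_congr rfl fun k _ => (Finset.mul_sum _ _ _)
          _ = ∑ k, ∑ l, ∑ s, (M r)⁻¹ l j * (M r)⁻¹ s k * c i k l s := by
              rw [Finset.sum_comm]
              exact Finset.sum_congr rfl fun k _ => Finset.sum_congr rfl fun l _ =>
                Finset.sum_congr rfl fun s _ => (mul_assoc _ _ _).symm
          _ = 0 := hz i j
      simpa [Matrix.mulVec, dotProduct, Matrix.transpose_apply] using hcalc
    have h2 : g = 0 := by
      have h3 := congrArg (fun v => (M r)ᵀ *ᵥ v) h1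
      simpa [Matrix.mulVec_mulVec, ← Matrix.transpose_mul, hρM] using h3
    exact congrFun h2 p
  -- recurrence step
  have step : ∀ (A : Matrix (Fin m) (Fin m) ℝ) (i p : Fin m) (r : ℝ), N ≤ r →
      (∑ k, ∑ s, A s k * c i k p s) + ∑ k, ∑ s, ((A * b) * (M r)⁻¹) s k * c i k p s
        = r * ∑ k, ∑ s, (A * (M r)⁻¹) s k * c i k p s := by
    intro A i p r hr
    have h1 : A + (A * b) * (M r)⁻¹ = r • (A * (M r)⁻¹) := by
      rw [← mul_smul_comm, hrrho r hr, Matrix.mul_add, mul_one, ← Matrix.mul_assoc]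
    have h2 : ∀ s k : Fin m, A s k + ((A * b) * (M r)⁻¹) s k = r * (A * (M r)⁻¹) s k := by
      intro s k
      have := congrFun (congrFun h1 s) k
      simpa [Matrix.add_apply, Matrix.smul_apply, smul_eq_mul] using this
    calc (∑ k, ∑ s, A s k * c i k p s) + ∑ k, ∑ s, ((A * b) * (M r)⁻¹) s k * c i k p s
        = ∑ k, ∑ s, (A s k + ((A * b) * (M r)⁻¹) s k) * c i k p s := by
          rw [← Finset.sum_add_distrib]
          refine Finset.sum_congr rfl fun k _ => ?_
          rw [← Finset.sum_add_distrib]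
          refine Finset.sum_congr rfl fun s _ => ?_
          ring
      _ = ∑ k, ∑ s, r * ((A * (M r)⁻¹) s k * c i k p s) := by
          refine Finset.sum_congr rfl fun k _ => Finset.sum_congr rfl fun s _ => ?_
          rw [h2 s k]; ring
      _ = r * ∑ k, ∑ s, (A * (M r)⁻¹) s k * c i k p s := by
          rw [Finset.mul_sum]
          exact Finset.sum_congr rfl fun k _ => (Finset.mul_sum _ _ _).symm
  -- order `r⁻¹` coefficient: `∑ k, c i k p k = 0`
  have hone : ∀ i p : Fin m,
      ∑ k, ∑ s, (1 : Matrix (Fin m) (Fin m) ℝ) s k * c i k p s = ∑ k, c i k p k := by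
    intro i p
    refine Finset.sum_congr rfl fun k _ => ?_
    simp [Matrix.one_apply, ite_mul, Finset.sum_ite_eq]
  have hrec1 : ∀ (i p : Fin m) (r : ℝ), N ≤ r →
      (∑ k, ∑ s, (1 : Matrix (Fin m) (Fin m) ℝ) s k * c i k p s)
        + ∑ k, ∑ s, (b * (M r)⁻¹) s k * c i k p s = 0 := by
    intro i p r hr
    have h := step 1 i p r hr
    rw [one_mul, one_mul] at h
    rw [h, key r hr i p, mul_zero]
  have hA : ∀ i p : Fin m, ∑ k, c i k p k = 0 := by
    intro i p
    have := ev_zero _ _ (philim b i p) (hrec1 i p)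
    rw [hone i p] at this
    exact this
  -- `φ_b ≡ 0` on `[N, ∞)`
  have hphib : ∀ (i p : Fin m) (r : ℝ), N ≤ r →
      ∑ k, ∑ s, (b * (M r)⁻¹) s k * c i k p s = 0 := by
    intro i p r hr
    have h := hrec1 i p r hr
    rw [hone i p, hA i p, zero_add] at h
    exact h
  -- order `r⁻²` coefficient: `∑ k s, b s k * c i k p s = 0`
  have hB : ∀ i p : Fin m, ∑ k, ∑ s, b s k * c i k p s = 0 := by
    intro i p
    apply ev_zero _ _ (philim (b * b) i p)
    intro r hr
    rw [step b i p r hr, hphib i p r hr, mul_zero]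
  exact ⟨hA, hB⟩

/-- **Constraints from the trace-free condition `C_{ikjk} = 0`.**
If the trace condition `∑_{k,l,s} ρ(r)_{lj} ρ(r)_{sk} c_{ikls} = 0` (with
`ρ(r) = (r·1 - b)⁻¹`) holds for all sufficiently large `r`, then `c_{ikjk} = 0`,
`c_{ijkl} b_{(lj)} = 0` and `c_{ijkl} b_{[lj]} = 0`. -/
theorem tracefree_constraints
    (m : ℕ) (hm : 1 ≤ m) (b : Matrix (Fin m) (Fin m) ℝ)
    (c : Fin m → Fin m → Fin m → Fin m → ℝ)
    (hanti : ∀ i j l s, c i j l s = -c j i l s)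
    (hpair : ∀ i j l s, c i j l s = c l s i j)
    (htrace : ∃ R : ℝ, ∀ r : ℝ, R ≤ r →
      IsUnit (r • (1 : Matrix (Fin m) (Fin m) ℝ) - b) ∧
      ∀ i j, ∑ k, ∑ l, ∑ s,
        (r • (1 : Matrix (Fin m) (Fin m) ℝ) - b)⁻¹ l j
          * (r • (1 : Matrix (Fin m) (Fin m) ℝ) - b)⁻¹ s k * c i k l s = 0) :
    (∀ i j, ∑ k, c i k j k = 0) ∧
    (∀ i k, ∑ j, ∑ l, c i j k l * ((b l j + b j l) / 2) = 0) ∧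
    (∀ i k, ∑ j, ∑ l, c i j k l * ((b l j - b j l) / 2) = 0) := by
  obtain ⟨hA, hB⟩ := tracefree_aux hm b c htrace
  have D1 : ∀ i k : Fin m, ∑ j, ∑ l, c i j k l * b l j = 0 := by
    intro i k
    have h := hB i k
    calc ∑ j, ∑ l, c i j k l * b l j = ∑ j, ∑ l, b l j * c i j k l := by
          exact Finset.sum_congr rfl fun j _ => Finset.sum_congr rfl fun l _ => mul_comm _ _
      _ = 0 := h
  have D2 : ∀ i k : Fin m, ∑ j, ∑ l, c i j k l * b j l = 0 := by
    intro i k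
    calc ∑ j, ∑ l, c i j k l * b j l = ∑ j, ∑ l, c k l i j * b j l := by
          exact Finset.sum_congr rfl fun j _ => Finset.sum_congr rfl fun l _ => by
            rw [hpair i j k l]
      _ = ∑ l, ∑ j, c k l i j * b j l := Finset.sum_comm
      _ = 0 := D1 k i
  refine ⟨hA, ?_, ?_⟩
  · intro i k
    calc ∑ j, ∑ l, c i j k l * ((b l j + b j l) / 2)
        = ∑ j, ∑ l, (c i j k l * b l j / 2 + c i j k l * b j l / 2) := by
          exact Finset.sum_congr rfl fun j _ => Finset.sum_congr rfl fun l _ => by ring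
      _ = (∑ j, ∑ l, c i j k l * b l j) / 2 + (∑ j, ∑ l, c i j k l * b j l) / 2 := by
          rw [Finset.sum_div, Finset.sum_div, ← Finset.sum_add_distrib]
          refine Finset.sum_congr rfl fun j _ => ?_
          rw [Finset.sum_div, Finset.sum_div, ← Finset.sum_add_distrib]
      _ = 0 := by rw [D1, D2]; norm_num
  · intro i k
    calc ∑ j, ∑ l, c i j k l * ((b l j - b j l) / 2)
        = ∑ j, ∑ l, (c i j k l * b l j / 2 - c i j k l * b j l / 2) := by
          exact Finset.sum_congr rfl fun j _ => Finset.sum_congr rfl fun l _ => by ring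
      _ = (∑ j, ∑ l, c i j k l * b l j) / 2 - (∑ j, ∑ l, c i j k l * b j l) / 2 := by
          rw [Finset.sum_div, Finset.sum_div, ← Finset.sum_sub_distrib]
          refine Finset.sum_congr rfl fun j _ => ?_
          rw [Finset.sum_div, Finset.sum_div, ← Finset.sum_sub_distrib]
      _ = 0 := by rw [D1, D2]; norm_num

end Aux
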